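/- arXiv:2302.00835 — 3 statements merged into one kernel-verified Lean document; each statement's English description precedes it below -/
import Mathlib

section
/- With T = T_0 ⊙ (T_1,...,T_p) and M as above (M[T_i] = M_i, off-diagonal connecting entries equal to δ), for any real y strictly greater than every eigenvalue of every M_ℓ (0 ≤ ℓ ≤ p), there exists δ = δ(y) > 0 such that λ_max(M) = y. -/
open Matrix Polynomial

def MatchesGraph {α : Type*} (A : Matrix α α ℝ) (G : SimpleGraph α) : Prop :=
  ∀ i j, i ≠ j → (A i j ≠ 0 ↔ G.Adj i j)

/-- The matrix of the tree `T₀ ⊙ (T₁,…,T_p)`: diagonal blocks `Ms i`, and connecting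
entries `δ` between the root `r 0` of `T₀` and the roots `r i` of the other trees. -/
noncomputable def odotMat {p : ℕ} {V : Fin (p + 1) → Type} [∀ i, DecidableEq (V i)]
    (Ms : ∀ i, Matrix (V i) (V i) ℝ) (r : ∀ i, V i) (δ : ℝ) :
    Matrix (Σ i, V i) (Σ i, V i) ℝ := fun a b =>
  if h : a.1 = b.1 then Ms b.1 (h ▸ a.2) b.2
  else if a = ⟨0, r 0⟩ ∧ b.2 = r b.1 then δ
  else if b = ⟨0, r 0⟩ ∧ a.2 = r a.1 then δ
  else 0

/-- `y` is the smallest eigenvalue of `A`. -/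
def IsLamMin {α : Type*} [Fintype α] [DecidableEq α] (A : Matrix α α ℝ) (y : ℝ) : Prop :=
  A.charpoly.IsRoot y ∧ ∀ z, A.charpoly.IsRoot z → y ≤ z

/-- `y` is the largest eigenvalue of `A`. -/
def IsLamMax {α : Type*} [Fintype α] [DecidableEq α] (A : Matrix α α ℝ) (y : ℝ) : Prop :=
  A.charpoly.IsRoot y ∧ ∀ z, A.charpoly.IsRoot z → z ≤ y

section Spectral

variable {n : Type*} [Fintype n] [DecidableEq n]

lemma charpoly_eval' (M : Matrix n n ℝ) (t : ℝ) :
    M.charpoly.eval t = (t • (1 : Matrix n n ℝ) - M).det := by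
  rw [Matrix.charpoly, eval_det, matPolyEquiv_charmatrix]
  simp [smul_eq_mul_diagonal]

lemma isRoot_charpoly_iff' (M : Matrix n n ℝ) (lam : ℝ) :
    M.charpoly.IsRoot lam ↔ ∃ v, v ≠ 0 ∧ M *ᵥ v = lam • v := by
  rw [Polynomial.IsRoot, charpoly_eval', ← Matrix.exists_mulVec_eq_zero_iff]
  constructor
  · rintro ⟨v, hv, h⟩
    refine ⟨v, hv, ?_⟩
    simp only [sub_mulVec, smul_mulVec, one_mulVec, sub_eq_zero] at h
    exact h.symm
  · rintro ⟨v, hv, h⟩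
    exact ⟨v, hv, by simp [sub_mulVec, smul_mulVec, h]⟩

variable [Nonempty n]

noncomputable def lmax (A : Matrix n n ℝ) (hA : A.IsHermitian) : ℝ :=
  Finset.univ.sup' Finset.univ_nonempty hA.eigenvalues

lemma eigenvalues_le_lmax (A : Matrix n n ℝ) (hA : A.IsHermitian) (i : n) :
    hA.eigenvalues i ≤ lmax A hA :=
  Finset.le_sup' _ (Finset.mem_univ i)

omit [Nonempty n] in
lemma eigvec_unit (A : Matrix n n ℝ) (hA : A.IsHermitian) (i : n) :
    ⇑(hA.eigenvectorBasis i) ⬝ᵥ ⇑(hA.eigenvectorBasis i) = 1 := by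
  have h := hA.eigenvectorBasis.orthonormal.1 i
  have h2 : (inner ℝ (hA.eigenvectorBasis i) (hA.eigenvectorBasis i) : ℝ) = 1 := by
    rw [real_inner_self_eq_norm_sq, h, one_pow]
  simp only [PiLp.inner_apply, RCLike.inner_apply, conj_trivial] at h2
  simpa [dotProduct, mul_comm] using h2

lemma rayleigh_le (A : Matrix n n ℝ) (hA : A.IsHermitian) (x : n → ℝ) :
    x ⬝ᵥ (A *ᵥ x) ≤ lmax A hA * (x ⬝ᵥ x) := by
  classical
  set U : Matrix n n ℝ := (hA.eigenvectorUnitary : Matrix n n ℝ) with hU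
  have hUU : U * Uᴴ = 1 := (Matrix.mem_unitaryGroup_iff).mp hA.eigenvectorUnitary.2
  have hUT : Uᴴ = Uᵀ := Matrix.conjTranspose_eq_transpose_of_trivial U
  have hA' : A = U * Matrix.diagonal hA.eigenvalues * Uᵀ := by
    have := hA.spectral_theorem
    rw [← hUT]; conv_lhs => rw [this]
    rw [Unitary.conjStarAlgAut_apply]
    simp [hU, Matrix.star_eq_conjTranspose, RCLike.ofReal_real_eq_id]
  set w : n → ℝ := Uᵀ *ᵥ x with hw
  have key : x ⬝ᵥ (A *ᵥ x) = w ⬝ᵥ (Matrix.diagonal hA.eigenvalues *ᵥ w) := by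
    conv_lhs => rw [hA']
    rw [← Matrix.mulVec_mulVec, ← Matrix.mulVec_mulVec,
      Matrix.dotProduct_mulVec x U, ← Matrix.mulVec_transpose, ← hw,
      Matrix.dotProduct_mulVec w _]
  have hnorm : w ⬝ᵥ w = x ⬝ᵥ x := by
    rw [hw, Matrix.dotProduct_mulVec, Matrix.vecMul_transpose, Matrix.mulVec_mulVec,
      ← hUT, hUU, Matrix.one_mulVec]
  rw [key, ← hnorm]
  simp only [dotProduct, Matrix.mulVec_diagonal, Finset.mul_sum]
  apply Finset.sum_le_sum
  intro i _
  have h1 : hA.eigenvalues i ≤ lmax A hA := eigenvalues_le_lmax A hA i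
  have h2 : 0 ≤ w i * w i := mul_self_nonneg _
  nlinarith [h1, h2]

lemma lmax_eigvec (A : Matrix n n ℝ) (hA : A.IsHermitian) :
    ∃ v : n → ℝ, v ≠ 0 ∧ v ⬝ᵥ v = 1 ∧ A *ᵥ v = lmax A hA • v := by
  obtain ⟨i, -, hi⟩ := Finset.exists_mem_eq_sup' (Finset.univ_nonempty (α := n)) hA.eigenvalues
  refine ⟨⇑(hA.eigenvectorBasis i), ?_, eigvec_unit A hA i, ?_⟩
  · intro h
    have := eigvec_unit A hA i
    rw [h] at this; simp at this
  · rw [hA.mulVec_eigenvectorBasis i, lmax, hi]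

/-- bound on the Rayleigh quotient of any matrix at a unit vector -/
lemma dot_mulVec_abs_le (C : Matrix n n ℝ) (v : n → ℝ) (hv : v ⬝ᵥ v = 1) :
    |v ⬝ᵥ (C *ᵥ v)| ≤ ∑ a, ∑ b, |C a b| := by
  have habs : ∀ a, |v a| ≤ 1 := by
    intro a
    rw [abs_le_one_iff_mul_self_le_one]
    calc v a * v a ≤ ∑ b, v b * v b :=
          Finset.single_le_sum (fun b _ => mul_self_nonneg (v b)) (Finset.mem_univ a)
      _ = 1 := hv
  calc |v ⬝ᵥ (C *ᵥ v)| ≤ ∑ a, |v a * (C *ᵥ v) a| := Finset.abs_sum_le_sum_abs _ _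
    _ ≤ ∑ a, ∑ b, |C a b| := by
        apply Finset.sum_le_sum
        intro a _
        rw [abs_mul]
        calc |v a| * |(C *ᵥ v) a| ≤ 1 * |(C *ᵥ v) a| := by
              exact mul_le_mul_of_nonneg_right (habs a) (abs_nonneg _)
          _ = |∑ b, C a b * v b| := by rw [one_mul]; rfl
          _ ≤ ∑ b, |C a b * v b| := Finset.abs_sum_le_sum_abs _ _
          _ ≤ ∑ b, |C a b| := by
              apply Finset.sum_le_sum
              intro b _
              rw [abs_mul]
              calc |C a b| * |v b| ≤ |C a b| * 1 :=
                    mul_le_mul_of_nonneg_left (habs b) (abs_nonneg _)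
                _ = |C a b| := mul_one _

lemma dotProduct_self_pos' {v : n → ℝ} (hv : v ≠ 0) : 0 < v ⬝ᵥ v := by
  have h0 : 0 ≤ v ⬝ᵥ v := Finset.sum_nonneg fun i _ => mul_self_nonneg (v i)
  rcases lt_or_eq_of_le h0 with h | h
  · exact h
  · exact absurd (dotProduct_self_eq_zero.mp h.symm) hv

end Spectral

section Odot

variable {p : ℕ} {V : Fin (p + 1) → Type} [∀ i, Fintype (V i)] [∀ i, DecidableEq (V i)]

omit [∀ i, Fintype (V i)] in
lemma odotMat_same (Ms : ∀ i, Matrix (V i) (V i) ℝ) (r : ∀ i, V i) (δ : ℝ)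
    (i : Fin (p+1)) (x y : V i) : odotMat Ms r δ ⟨i, x⟩ ⟨i, y⟩ = Ms i x y := by
  simp [odotMat]

omit [∀ i, Fintype (V i)] in
lemma odotMat_ne (Ms : ∀ i, Matrix (V i) (V i) ℝ) (r : ∀ i, V i) (δ : ℝ)
    {a b : Σ i, V i} (h : a.1 ≠ b.1) :
      odotMat Ms r δ a b =
        if (a = ⟨0, r 0⟩ ∧ b.2 = r b.1) ∨ (b = ⟨0, r 0⟩ ∧ a.2 = r a.1) then δ else 0 := by
  rw [odotMat, dif_neg h]
  by_cases h1 : a = ⟨0, r 0⟩ ∧ b.2 = r b.1 <;> by_cases h2 : b = ⟨0, r 0⟩ ∧ a.2 = r a.1 <;>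
    simp [h1, h2]

omit [∀ i, Fintype (V i)] in
lemma odotMat_isHerm (Ms : ∀ i, Matrix (V i) (V i) ℝ) (hsym : ∀ i, (Ms i).IsSymm)
    (r : ∀ i, V i) (δ : ℝ) : (odotMat Ms r δ).IsHermitian := by
  rw [Matrix.IsHermitian, Matrix.conjTranspose_eq_transpose_of_trivial]
  ext a b
  rcases a with ⟨i, x⟩; rcases b with ⟨j, y⟩
  rw [Matrix.transpose_apply]
  by_cases h : i = j
  · subst h
    rw [odotMat_same, odotMat_same]
    exact (hsym i).apply x y
  · rw [odotMat_ne _ _ _ (by simpa using Ne.symm h), odotMat_ne _ _ _ (by simpa using h)]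
    exact if_congr or_comm rfl rfl

omit [∀ i, Fintype (V i)] in
lemma odotMat_affine (Ms : ∀ i, Matrix (V i) (V i) ℝ) (r : ∀ i, V i) (δ : ℝ) :
    odotMat Ms r δ = odotMat Ms r 0 + δ • odotMat (fun i => (0 : Matrix (V i) (V i) ℝ)) r 1 := by
  ext a b
  rcases a with ⟨i, x⟩; rcases b with ⟨j, y⟩
  by_cases h : i = j
  · subst h
    simp [odotMat_same]
  · rw [Matrix.add_apply, Matrix.smul_apply,
      odotMat_ne _ _ _ (by simpa using h), odotMat_ne _ _ _ (by simpa using h),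
      odotMat_ne _ _ _ (by simpa using h)]
    by_cases hc : (Sigma.mk i x = ⟨0, r 0⟩ ∧ y = r j) ∨ (Sigma.mk j y = ⟨0, r 0⟩ ∧ x = r i) <;>
      simp [hc]

/-- every eigenvalue of the block-diagonal matrix `odotMat Ms r 0` comes from a block -/
lemma odotMat_zero_eig (Ms : ∀ i, Matrix (V i) (V i) ℝ) (r : ∀ i, V i)
    (lam : ℝ) (v : (Σ i, V i) → ℝ) (hv0 : v ≠ 0)
    (hv : odotMat Ms r 0 *ᵥ v = lam • v) :
    ∃ ℓ, (Ms ℓ).charpoly.IsRoot lam := by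
  obtain ⟨a, ha⟩ := Function.ne_iff.mp hv0
  obtain ⟨ℓ, x0⟩ := a
  refine ⟨ℓ, (isRoot_charpoly_iff' _ _).mpr ⟨fun t => v ⟨ℓ, t⟩, ?_, ?_⟩⟩
  · intro h
    exact ha (congrFun h x0)
  · funext t
    have h1 := congrFun hv ⟨ℓ, t⟩
    have h2 : (odotMat Ms r 0 *ᵥ v) ⟨ℓ, t⟩ = ∑ s, Ms ℓ t s * v ⟨ℓ, s⟩ := by
      rw [Matrix.mulVec, dotProduct, ← Finset.univ_sigma_univ, Finset.sum_sigma]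
      rw [Finset.sum_eq_single_of_mem ℓ (Finset.mem_univ ℓ)]
      · exact Finset.sum_congr rfl fun s _ => by rw [odotMat_same]
      · intro j _ hj
        apply Finset.sum_eq_zero
        intro s _
        rw [odotMat_ne _ _ _ (by simpa using hj.symm)]
        simp
    rw [h2] at h1
    rw [Matrix.mulVec, dotProduct, h1]
    simp

end Odot

/-- Given `y` strictly greater than every eigenvalue of every block, there is a
positive connecting weight `δ` such that `y` is the largest eigenvalue of the
combined matrix. -/
theorem stmt6 {p : ℕ} (hp : 1 ≤ p) {V : Fin (p + 1) → Type} [∀ i, Fintype (V i)]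
    [∀ i, DecidableEq (V i)] (G : ∀ i, SimpleGraph (V i)) (hT : ∀ i, (G i).IsTree)
    (r : ∀ i, V i) (Ms : ∀ i, Matrix (V i) (V i) ℝ) (hsym : ∀ i, (Ms i).IsSymm)
    (hmatch : ∀ i, MatchesGraph (Ms i) (G i)) (y : ℝ)
    (hy : ∀ ℓ lam, ((Ms ℓ).charpoly).IsRoot lam → lam < y) :
    ∃ δ : ℝ, 0 < δ ∧ IsLamMax (odotMat Ms r δ) y := by
  classical
  haveI hne : ∀ i, Nonempty (V i) := fun i => (hT i).isConnected.nonempty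
  haveI : Nonempty (Σ i, V i) := ⟨⟨0, Classical.arbitrary _⟩⟩
  set C : Matrix (Σ i, V i) (Σ i, V i) ℝ := odotMat (fun i => 0) r 1 with hC
  have hherm : ∀ δ : ℝ, (odotMat Ms r δ).IsHermitian := fun δ => odotMat_isHerm Ms hsym r δ
  set g : ℝ → ℝ := fun δ => lmax (odotMat Ms r δ) (hherm δ) with hg
  -- each g δ is an eigenvalue with unit eigenvector, and dominates all eigenvalues
  -- Step 1 : g 0 < y
  have step1 : g 0 < y := by
    obtain ⟨v, hv0, -, hveq⟩ := lmax_eigvec _ (hherm 0)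
    obtain ⟨ℓ, hℓ⟩ := odotMat_zero_eig Ms r (g 0) v hv0 hveq
    exact hy ℓ _ hℓ
  -- Lipschitz bound
  set K : ℝ := ∑ a, ∑ b, |C a b| with hK
  have hK0 : 0 ≤ K :=
    Finset.sum_nonneg fun a _ => Finset.sum_nonneg fun b _ => abs_nonneg _
  have hlip : ∀ δ₁ δ₂ : ℝ, g δ₁ ≤ g δ₂ + K * |δ₁ - δ₂| := by
    intro δ₁ δ₂
    obtain ⟨v, hv0, hvunit, hveq⟩ := lmax_eigvec _ (hherm δ₁)
    have hval : g δ₁ = v ⬝ᵥ (odotMat Ms r δ₁ *ᵥ v) := by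
      rw [hveq, dotProduct_smul, smul_eq_mul, hvunit, mul_one]
    have hdecomp : odotMat Ms r δ₁ = odotMat Ms r δ₂ + (δ₁ - δ₂) • C := by
      rw [odotMat_affine Ms r δ₁, odotMat_affine Ms r δ₂, hC]
      rw [add_assoc, ← add_smul]
      ring_nf
    have h2 : v ⬝ᵥ (odotMat Ms r δ₂ *ᵥ v) ≤ g δ₂ := by
      have := rayleigh_le (odotMat Ms r δ₂) (hherm δ₂) v
      rwa [hvunit, mul_one] at this
    have h3 : (δ₁ - δ₂) * (v ⬝ᵥ (C *ᵥ v)) ≤ K * |δ₁ - δ₂| := by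
      have := dot_mulVec_abs_le C v hvunit
      calc (δ₁ - δ₂) * (v ⬝ᵥ (C *ᵥ v)) ≤ |(δ₁ - δ₂) * (v ⬝ᵥ (C *ᵥ v))| := le_abs_self _
        _ = |δ₁ - δ₂| * |v ⬝ᵥ (C *ᵥ v)| := abs_mul _ _
        _ ≤ |δ₁ - δ₂| * K := mul_le_mul_of_nonneg_left this (abs_nonneg _)
        _ = K * |δ₁ - δ₂| := mul_comm _ _
    calc g δ₁ = v ⬝ᵥ (odotMat Ms r δ₂ *ᵥ v) + (δ₁ - δ₂) * (v ⬝ᵥ (C *ᵥ v)) := by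
          rw [hval, hdecomp, Matrix.add_mulVec, dotProduct_add, Matrix.smul_mulVec,
            dotProduct_smul, smul_eq_mul]
      _ ≤ g δ₂ + K * |δ₁ - δ₂| := add_le_add h2 h3
  have hcont : Continuous g := by
    have : LipschitzWith (Real.toNNReal K) g := by
      apply LipschitzWith.of_dist_le_mul
      intro a b
      rw [Real.dist_eq, Real.dist_eq, Real.coe_toNNReal K hK0]
      rw [abs_sub_le_iff]
      constructor
      · have := hlip a b; linarith
      · have := hlip b a; rw [abs_sub_comm]; linarith
    exact this.continuous
  -- Step 4 : a point where g is large
  have hne01 : (0 : Fin (p+1)) ≠ 1 := by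
    intro h
    have hv := congrArg Fin.val h
    rw [Fin.val_zero, Fin.val_one'] at hv
    rw [Nat.mod_eq_of_lt (by omega)] at hv
    omega
  have h01 : (⟨0, r 0⟩ : Σ i, V i) ≠ ⟨1, r 1⟩ := by
    intro h
    exact hne01 (congrArg Sigma.fst h)
  set c0 : ℝ := Ms 0 (r 0) (r 0) with hc0
  set c1 : ℝ := Ms 1 (r 1) (r 1) with hc1
  set δ₁ : ℝ := |c0| / 2 + |c1| / 2 + |y| + 1 with hδ₁
  have hδ₁pos : 0 < δ₁ := by positivity
  have step4 : y ≤ g δ₁ := by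
    set x : (Σ i, V i) → ℝ :=
      Pi.single (⟨0, r 0⟩ : Σ i, V i) 1 + Pi.single (⟨1, r 1⟩ : Σ i, V i) 1 with hx
    have hentry1 : odotMat Ms r δ₁ ⟨0, r 0⟩ ⟨1, r 1⟩ = δ₁ := by
      rw [odotMat_ne _ _ _ hne01, if_pos (Or.inl ⟨rfl, rfl⟩)]
    have hentry2 : odotMat Ms r δ₁ ⟨1, r 1⟩ ⟨0, r 0⟩ = δ₁ := by
      rw [odotMat_ne _ _ _ (Ne.symm hne01), if_pos (Or.inr ⟨rfl, rfl⟩)]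
    have hxx : x ⬝ᵥ x = 2 := by
      simp [hx, dotProduct_add, add_dotProduct, dotProduct_single,
        single_dotProduct, Pi.single_apply, h01, Ne.symm h01]
      norm_num
    have hray : x ⬝ᵥ (odotMat Ms r δ₁ *ᵥ x) = c0 + c1 + 2 * δ₁ := by
      rw [hx]
      simp only [Matrix.mulVec_add, dotProduct_add, add_dotProduct,
        Matrix.mulVec_single, mul_one, MulOpposite.op_one, one_smul]
      have e1 : ∀ (a b : Σ i, V i),
          (Pi.single a (1:ℝ)) ⬝ᵥ (odotMat Ms r δ₁).col b = odotMat Ms r δ₁ a b := by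
        intro a b
        rw [single_dotProduct, one_mul]; rfl
      rw [e1, e1, e1, e1, hentry1, hentry2, odotMat_same, odotMat_same]
      ring
    have hb := rayleigh_le (odotMat Ms r δ₁) (hherm δ₁) x
    rw [hxx, hray] at hb
    have ha0 : -|c0| ≤ c0 := neg_abs_le c0
    have ha1 : -|c1| ≤ c1 := neg_abs_le c1
    have hay : y ≤ |y| := le_abs_self y
    have : g δ₁ = lmax (odotMat Ms r δ₁) (hherm δ₁) := rfl
    rw [hδ₁] at hb
    linarith
  -- intermediate value theorem
  have hmem : y ∈ Set.Icc (g 0) (g δ₁) := ⟨step1.le, step4⟩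
  have hIcc := intermediate_value_Icc hδ₁pos.le hcont.continuousOn
  obtain ⟨δ, hδmem, hδeq⟩ := hIcc hmem
  refine ⟨δ, ?_, ?_, ?_⟩
  · rcases lt_or_eq_of_le hδmem.1 with h | h
    · exact h
    · exfalso
      rw [← h] at hδeq
      rw [hδeq] at step1
      exact lt_irrefl _ step1
  · obtain ⟨v, hv0, -, hveq⟩ := lmax_eigvec _ (hherm δ)
    rw [show lmax (odotMat Ms r δ) (hherm δ) = g δ from rfl, hδeq] at hveq
    exact (isRoot_charpoly_iff' _ _).mpr ⟨v, hv0, hveq⟩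
  · intro z hz
    obtain ⟨v, hv0, hveq⟩ := (isRoot_charpoly_iff' _ _).mp hz
    have h1 := rayleigh_le (odotMat Ms r δ) (hherm δ) v
    rw [hveq, dotProduct_smul, smul_eq_mul] at h1
    have hpos := dotProduct_self_pos' hv0
    have h2 : lmax (odotMat Ms r δ) (hherm δ) = y := hδeq
    rw [h2] at h1
    exact le_of_mul_le_mul_right (by linarith) hpos
end

section
/- With T = T_0 ⊙ (T_1,...,T_p) and M as above, for any real y strictly less than every eigenvalue of every M_ℓ (0 ≤ ℓ ≤ p), there exists δ = δ(y) > 0 such that λ_min(M) = y. -/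
open Matrix Polynomial

/-! ### Auxiliary lemmas -/

set_option linter.unusedSectionVars false

section Aux

variable {n : Type*} [Fintype n] [DecidableEq n]

lemma aux_isHermitian_of_isSymm {A : Matrix n n ℝ} (h : A.IsSymm) : A.IsHermitian := by
  rwa [Matrix.IsHermitian, conjTranspose_eq_transpose_of_trivial]

lemma aux_eval_charpoly (A : Matrix n n ℝ) (t : ℝ) :
    A.charpoly.eval t = (t • (1 : Matrix n n ℝ) - A).det := by
  rw [Matrix.charpoly, ← Polynomial.coe_evalRingHom, RingHom.map_det]
  congr 1
  ext i j
  by_cases h : i = j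
  · subst h; simp [charmatrix_apply_eq, Matrix.one_apply, Matrix.smul_apply]
  · simp [charmatrix_apply_ne _ _ _ h, Matrix.one_apply, h, Matrix.smul_apply]

lemma aux_isRoot_of_eigvec {A : Matrix n n ℝ} {t : ℝ} {v : n → ℝ} (hv : v ≠ 0)
    (h : A *ᵥ v = t • v) : A.charpoly.IsRoot t := by
  rw [IsRoot.def, aux_eval_charpoly, ← Matrix.exists_mulVec_eq_zero_iff]
  exact ⟨v, hv, by simp [sub_mulVec, smul_mulVec, h]⟩

lemma aux_eigvec_of_isRoot {A : Matrix n n ℝ} {t : ℝ} (h : A.charpoly.IsRoot t) :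
    ∃ v, v ≠ 0 ∧ A *ᵥ v = t • v := by
  rw [IsRoot.def, aux_eval_charpoly, ← Matrix.exists_mulVec_eq_zero_iff] at h
  obtain ⟨v, hv, hv2⟩ := h
  refine ⟨v, hv, ?_⟩
  rw [sub_mulVec, smul_mulVec, one_mulVec, sub_eq_zero] at hv2
  exact hv2.symm

lemma aux_posdef_of_roots_pos {A : Matrix n n ℝ} (hA : A.IsHermitian)
    (h : ∀ t, A.charpoly.IsRoot t → 0 < t) : A.PosDef := by
  have heig : ∀ i, 0 < hA.eigenvalues i := by
    intro i
    refine h _ (aux_isRoot_of_eigvec (v := ⇑(hA.eigenvectorBasis i)) (fun h0 =>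
      hA.eigenvectorBasis.orthonormal.ne_zero i (by simpa using congrArg (WithLp.toLp 2) h0)) ?_)
    exact hA.mulVec_eigenvectorBasis i
  have hsd : A.PosSemidef := hA.posSemidef_iff_eigenvalues_nonneg.mpr (fun i => (heig i).le)
  have hdet : A.det ≠ 0 := by
    rw [hA.det_eq_prod_eigenvalues]
    exact ne_of_gt (Finset.prod_pos fun i _ => heig i)
  refine posDef_iff_dotProduct_mulVec.mpr ⟨hA, fun x hx => ?_⟩
  rcases (hsd.dotProduct_mulVec_nonneg x).lt_or_eq with h' | h'
  · exact h'
  · exfalso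
    have h0 : A *ᵥ x = 0 := (hsd.dotProduct_mulVec_zero_iff x).mp h'.symm
    have hinj := Matrix.mulVec_injective_iff_isUnit.mpr
      ((Matrix.isUnit_iff_isUnit_det A).mpr hdet.isUnit)
    exact hx (hinj (by simpa using h0))

lemma aux_cs_matrix {D : Matrix n n ℝ} (hD : D.PosDef) (e x : n → ℝ) :
    (e ⬝ᵥ x)^2 ≤ (e ⬝ᵥ (D⁻¹ *ᵥ e)) * (x ⬝ᵥ (D *ᵥ x)) := by
  by_cases he : e = 0
  · simp [he]
  have hDsymm : Dᵀ = D := by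
    rw [← conjTranspose_eq_transpose_of_trivial]; exact hD.isHermitian
  set g : n → ℝ := D⁻¹ *ᵥ e with hg
  have hDg : D *ᵥ g = e := by
    rw [hg, mulVec_mulVec, Matrix.mul_nonsing_inv D ((Matrix.isUnit_iff_isUnit_det D).mp hD.isUnit),
      one_mulVec]
  have ha : 0 < e ⬝ᵥ g := by
    have := hD.inv.dotProduct_mulVec_pos he
    simpa using this
  set a := e ⬝ᵥ g with hadef
  set s := e ⬝ᵥ x with hs
  have hgDx : g ⬝ᵥ (D *ᵥ x) = s := by
    rw [dotProduct_mulVec, ← mulVec_transpose, hDsymm, hDg]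
  have hgDg : g ⬝ᵥ (D *ᵥ g) = a := by rw [hDg, dotProduct_comm]
  have hxDg : x ⬝ᵥ (D *ᵥ g) = s := by rw [hDg, dotProduct_comm, hs]
  have key : 0 ≤ (x - (s/a) • g) ⬝ᵥ (D *ᵥ (x - (s/a) • g)) := by
    have := hD.posSemidef.dotProduct_mulVec_nonneg (x - (s/a) • g)
    simpa using this
  have expand : (x - (s/a) • g) ⬝ᵥ (D *ᵥ (x - (s/a) • g))
      = x ⬝ᵥ (D *ᵥ x) - (s/a) * s - (s/a) * s + (s/a)^2 * a := by
    simp only [mulVec_sub, mulVec_smul, sub_dotProduct, dotProduct_sub, smul_dotProduct,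
      dotProduct_smul, smul_eq_mul, hgDx, hgDg, hxDg]
    ring
  rw [expand] at key
  have h2 : (s/a)^2 * a = s^2/a := by field_simp
  rw [h2] at key
  have hss : (s/a) * s = s^2/a := by field_simp
  have hq : s^2/a ≤ x ⬝ᵥ (D *ᵥ x) := by linarith [key, hss]
  have := (div_le_iff₀ ha).mp hq
  linarith [this, mul_comm (x ⬝ᵥ (D *ᵥ x)) a]

end Aux

section OdotAux

variable {p : ℕ} {V : Fin (p + 1) → Type} [∀ i, Fintype (V i)] [∀ i, DecidableEq (V i)]
  (Ms : ∀ i, Matrix (V i) (V i) ℝ) (r : ∀ i, V i) (δ : ℝ)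

lemma odotMat_entry_diag (i : Fin (p+1)) (v w : V i) :
    odotMat Ms r δ ⟨i, v⟩ ⟨i, w⟩ = Ms i v w := by simp [odotMat]

lemma odotMat_entry_row0 (w : V 0) {i : Fin (p+1)} (hi : i ≠ 0) (v : V i) :
    odotMat Ms r δ ⟨0, w⟩ ⟨i, v⟩ = if w = r 0 ∧ v = r i then δ else 0 := by
  have h0i : ¬ ((0 : Fin (p+1)) = i) := fun h => hi h.symm
  simp only [odotMat, dif_neg h0i, Sigma.mk.inj_iff, heq_eq_eq, hi, false_and, if_false, and_false]
  simp

lemma odotMat_entry_col0 {i : Fin (p+1)} (hi : i ≠ 0) (v : V i) (w : V 0) :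
    odotMat Ms r δ ⟨i, v⟩ ⟨0, w⟩ = if w = r 0 ∧ v = r i then δ else 0 := by
  simp only [odotMat, dif_neg hi, Sigma.mk.inj_iff, heq_eq_eq, hi, false_and, if_false, and_false]
  simp

lemma odotMat_entry_offdiag {i j : Fin (p+1)} (hi : i ≠ 0) (hj : j ≠ 0) (hij : i ≠ j)
    (v : V i) (w : V j) : odotMat Ms r δ ⟨i, v⟩ ⟨j, w⟩ = 0 := by
  simp only [odotMat, dif_neg hij, Sigma.mk.inj_iff, heq_eq_eq, hi, hj, false_and, if_false]

lemma odotMat_mulVec_zero (x : (Σ i, V i) → ℝ) (w : V 0) :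
    (odotMat Ms r δ *ᵥ x) ⟨0, w⟩ = (Ms 0 *ᵥ fun v => x ⟨0, v⟩) w
      + δ * (if w = r 0 then (∑ k ∈ ({0}ᶜ : Finset (Fin (p+1))), x ⟨k, r k⟩) else 0) := by
  rw [mulVec, dotProduct, ← Finset.univ_sigma_univ, Finset.sum_sigma]
  rw [← Finset.sum_add_sum_compl {(0 : Fin (p+1))}]
  congr 1
  · rw [Finset.sum_singleton]
    simp [odotMat_entry_diag, mulVec, dotProduct]
  · trans (∑ i ∈ ({0}ᶜ : Finset (Fin (p+1))), ∑ v : V i,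
        (if w = r 0 ∧ v = r i then δ else 0) * x ⟨i, v⟩)
    · refine Finset.sum_congr rfl fun i hi => Finset.sum_congr rfl fun v _ => ?_
      rw [odotMat_entry_row0 _ _ _ _ (by simpa using hi)]
    rcases eq_or_ne w (r 0) with hw | hw
    · subst hw
      rw [if_pos rfl, Finset.mul_sum]
      refine Finset.sum_congr rfl fun i hi => ?_
      simp [Finset.sum_ite_eq']
    · simp [hw]

lemma odotMat_mulVec_ne (x : (Σ i, V i) → ℝ) {j : Fin (p+1)} (hj : j ≠ 0) (w : V j) :
    (odotMat Ms r δ *ᵥ x) ⟨j, w⟩ = (Ms j *ᵥ fun v => x ⟨j, v⟩) w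
      + δ * (if w = r j then x ⟨0, r 0⟩ else 0) := by
  rw [mulVec, dotProduct, ← Finset.univ_sigma_univ, Finset.sum_sigma]
  rw [← Finset.sum_add_sum_compl {j}]
  congr 1
  · rw [Finset.sum_singleton]
    simp [odotMat_entry_diag, mulVec, dotProduct]
  · rw [Finset.sum_eq_single_of_mem 0 (by simpa [Finset.mem_compl] using hj.symm)
      (fun k hk hk0 => ?_)]
    · have : ∀ v : V 0, odotMat Ms r δ ⟨j, w⟩ ⟨0, v⟩ = if v = r 0 ∧ w = r j then δ else 0 := by
        intro v; rw [odotMat_entry_col0 _ _ _ hj]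
      rw [Finset.sum_congr rfl fun v _ => by rw [this v]]
      rcases eq_or_ne w (r j) with hw | hw
      · simp [hw, Finset.sum_ite_eq']
      · simp [hw]
    · have hkj : k ≠ j := by simpa [Finset.mem_compl] using hk
      refine Finset.sum_eq_zero fun v _ => ?_
      rw [odotMat_entry_offdiag _ _ _ hj hk0 (Ne.symm hkj)]
      exact zero_mul _

lemma odotMat_quadForm (x : (Σ i, V i) → ℝ) :
    x ⬝ᵥ (odotMat Ms r δ *ᵥ x)
      = (∑ j, ((fun v => x ⟨j, v⟩) ⬝ᵥ (Ms j *ᵥ fun v => x ⟨j, v⟩)))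
        + 2*δ*(x ⟨0, r 0⟩)*(∑ k ∈ ({0}ᶜ : Finset (Fin (p+1))), x ⟨k, r k⟩) := by
  set T := ∑ k ∈ ({0}ᶜ : Finset (Fin (p+1))), x ⟨k, r k⟩ with hT
  rw [dotProduct, ← Finset.univ_sigma_univ, Finset.sum_sigma]
  rw [← Finset.sum_add_sum_compl {(0 : Fin (p+1))}]
  have h0 : ∑ j ∈ ({(0 : Fin (p+1))} : Finset _), ∑ w : V j, x ⟨j, w⟩ * (odotMat Ms r δ *ᵥ x) ⟨j, w⟩
      = ((fun v => x ⟨0, v⟩) ⬝ᵥ (Ms 0 *ᵥ fun v => x ⟨0, v⟩)) + δ * x ⟨0, r 0⟩ * T := by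
    rw [Finset.sum_singleton]
    trans ∑ w : V 0, x ⟨0, w⟩ * ((Ms 0 *ᵥ fun v => x ⟨0, v⟩) w + δ * (if w = r 0 then T else 0))
    · exact Finset.sum_congr rfl fun w _ => by rw [odotMat_mulVec_zero]
    · simp only [mul_add, Finset.sum_add_distrib, dotProduct, mul_ite, mul_zero,
        Finset.sum_ite_eq', Finset.mem_univ, if_true]
      ring
  have h1 : ∑ j ∈ ({(0 : Fin (p+1))}ᶜ : Finset _), ∑ w : V j, x ⟨j, w⟩ * (odotMat Ms r δ *ᵥ x) ⟨j, w⟩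
      = (∑ j ∈ ({(0 : Fin (p+1))}ᶜ : Finset _), ((fun v => x ⟨j, v⟩) ⬝ᵥ (Ms j *ᵥ fun v => x ⟨j, v⟩)))
        + δ * x ⟨0, r 0⟩ * T := by
    trans ∑ j ∈ ({(0 : Fin (p+1))}ᶜ : Finset _),
        (((fun v => x ⟨j, v⟩) ⬝ᵥ (Ms j *ᵥ fun v => x ⟨j, v⟩)) + δ * x ⟨0, r 0⟩ * x ⟨j, r j⟩)
    · refine Finset.sum_congr rfl fun j hj => ?_
      have hj0 : j ≠ 0 := by simpa using hj
      trans ∑ w : V j, x ⟨j, w⟩ *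
          ((Ms j *ᵥ fun v => x ⟨j, v⟩) w + δ * (if w = r j then x ⟨0, r 0⟩ else 0))
      · exact Finset.sum_congr rfl fun w _ => by rw [odotMat_mulVec_ne _ _ _ _ hj0]
      · simp only [mul_add, Finset.sum_add_distrib, dotProduct, mul_ite, mul_zero,
          Finset.sum_ite_eq', Finset.mem_univ, if_true]
        ring
    · rw [Finset.sum_add_distrib, ← Finset.mul_sum, ← hT]
  rw [h0, h1, ← Finset.sum_add_sum_compl {(0 : Fin (p+1))}
    (fun j => ((fun v => x ⟨j, v⟩) ⬝ᵥ (Ms j *ᵥ fun v => x ⟨j, v⟩))), Finset.sum_singleton]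
  ring

lemma odotMat_isSymm (hsym : ∀ i, (Ms i).IsSymm) : (odotMat Ms r δ).IsSymm := by
  refine Matrix.IsSymm.ext fun a b => ?_
  obtain ⟨i, v⟩ := a; obtain ⟨j, w⟩ := b
  rcases eq_or_ne i j with h | h
  · subst h; rw [odotMat_entry_diag, odotMat_entry_diag]
    exact (hsym i).apply v w
  · rcases eq_or_ne i 0 with hi | hi
    · subst hi
      have hj : j ≠ 0 := fun hh => h hh.symm
      rw [odotMat_entry_col0 _ _ _ hj, odotMat_entry_row0 _ _ _ _ hj]
    · rcases eq_or_ne j 0 with hj | hj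
      · subst hj
        rw [odotMat_entry_col0 _ _ _ hi, odotMat_entry_row0 _ _ _ _ hi]
      · rw [odotMat_entry_offdiag _ _ _ hi hj h, odotMat_entry_offdiag _ _ _ hj hi (Ne.symm h)]

lemma sigma_dotProduct (x z : (Σ i, V i) → ℝ) :
    x ⬝ᵥ z = ∑ j, ((fun v => x ⟨j, v⟩) ⬝ᵥ (fun v => z ⟨j, v⟩)) := by
  rw [dotProduct, ← Finset.univ_sigma_univ, Finset.sum_sigma]; rfl

end OdotAux

/-- Given `y` strictly less than every eigenvalue of every block, there is a
positive connecting weight `δ` such that `y` is the smallest eigenvalue of the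
combined matrix. -/
theorem stmt7 {p : ℕ} (hp : 1 ≤ p) {V : Fin (p + 1) → Type} [∀ i, Fintype (V i)]
    [∀ i, DecidableEq (V i)] (G : ∀ i, SimpleGraph (V i)) (hT : ∀ i, (G i).IsTree)
    (r : ∀ i, V i) (Ms : ∀ i, Matrix (V i) (V i) ℝ) (hsym : ∀ i, (Ms i).IsSymm)
    (hmatch : ∀ i, MatchesGraph (Ms i) (G i)) (y : ℝ)
    (hy : ∀ ℓ lam, ((Ms ℓ).charpoly).IsRoot lam → y < lam) :
    ∃ δ : ℝ, 0 < δ ∧ IsLamMin (odotMat Ms r δ) y := by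
  classical
  -- each block minus `y` is positive definite
  have hD : ∀ i, (Ms i - y • 1).PosDef := by
    intro i
    apply aux_posdef_of_roots_pos
    · exact (aux_isHermitian_of_isSymm (hsym i)).sub (by simp [Matrix.IsHermitian])
    · intro t ht
      obtain ⟨v, hv, hv2⟩ := aux_eigvec_of_isRoot ht
      have hMs : Ms i *ᵥ v = (t + y) • v := by
        rw [sub_mulVec, smul_mulVec, one_mulVec, sub_eq_iff_eq_add] at hv2
        rw [hv2, add_smul]
      have := hy i (t + y) (aux_isRoot_of_eigvec hv hMs)
      linarith
  set g : ∀ i, V i → ℝ := fun i => (Ms i - y • 1)⁻¹ *ᵥ Pi.single (r i) 1 with hgdef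
  have hgr : ∀ i, 0 < g i (r i) := by
    intro i
    have hne : (Pi.single (r i) 1 : V i → ℝ) ≠ 0 := by
      intro h; have := congrFun h (r i); simp at this
    have h1 := (hD i).inv.dotProduct_mulVec_pos hne
    simpa [hgdef] using h1
  have hDg : ∀ i, (Ms i - y • 1) *ᵥ g i = Pi.single (r i) 1 := by
    intro i
    rw [hgdef]
    simp only
    rw [mulVec_mulVec, Matrix.mul_nonsing_inv _ ((Matrix.isUnit_iff_isUnit_det _).mp
      (hD i).isUnit), one_mulVec]
  have hMsg : ∀ i, Ms i *ᵥ g i = Pi.single (r i) 1 + y • g i := by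
    intro i
    have := hDg i
    rwa [sub_mulVec, smul_mulVec, one_mulVec, sub_eq_iff_eq_add] at this
  set b : ℝ := ∑ k ∈ ({0}ᶜ : Finset (Fin (p+1))), g k (r k) with hbdef
  have hone : (1 : Fin (p+1)) ≠ 0 := by
    simp only [ne_eq, Fin.ext_iff, Fin.val_one', Fin.val_zero]
    rw [Nat.mod_eq_of_lt (by omega)]
    exact one_ne_zero
  have hb : 0 < b := by
    rw [hbdef]
    exact Finset.sum_pos (fun k _ => hgr k) ⟨1, by simp [hone]⟩
  set δ : ℝ := (Real.sqrt (g 0 (r 0) * b))⁻¹ with hδdef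
  have hδ : 0 < δ := by
    rw [hδdef]
    exact inv_pos.mpr (Real.sqrt_pos.mpr (mul_pos (hgr 0) hb))
  have hδ2 : δ^2 * (g 0 (r 0) * b) = 1 := by
    rw [hδdef, inv_pow, Real.sq_sqrt (mul_nonneg (hgr 0).le hb.le)]
    exact inv_mul_cancel₀ (ne_of_gt (mul_pos (hgr 0) hb))
  -- the PSD inequality
  have psd : ∀ x : (Σ i, V i) → ℝ, y * (x ⬝ᵥ x) ≤ x ⬝ᵥ (odotMat Ms r δ *ᵥ x) := by
    intro x
    rw [odotMat_quadForm, sigma_dotProduct x x]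
    have hQ : ∀ j : Fin (p+1), ((fun v => x ⟨j, v⟩) ⬝ᵥ (Ms j *ᵥ fun v => x ⟨j, v⟩))
        = ((fun v => x ⟨j, v⟩) ⬝ᵥ ((Ms j - y • 1) *ᵥ fun v => x ⟨j, v⟩))
          + y * ((fun v => x ⟨j, v⟩) ⬝ᵥ (fun v => x ⟨j, v⟩)) := by
      intro j
      rw [sub_mulVec, dotProduct_sub, smul_mulVec, one_mulVec, dotProduct_smul,
        smul_eq_mul]
      ring
    simp only [hQ, Finset.sum_add_distrib, ← Finset.mul_sum]
    set q : Fin (p+1) → ℝ :=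
      fun j => ((fun v => x ⟨j, v⟩) ⬝ᵥ ((Ms j - y • 1) *ᵥ fun v => x ⟨j, v⟩)) with hqdef
    have hq : ∀ j, 0 ≤ q j := by
      intro j
      have := (hD j).posSemidef.dotProduct_mulVec_nonneg (fun v => x ⟨j, v⟩)
      simpa [hqdef] using this
    set s : ℝ := x ⟨0, r 0⟩ with hsdef
    set t : ℝ := ∑ k ∈ ({0}ᶜ : Finset (Fin (p+1))), x ⟨k, r k⟩ with htdef
    have hcs : ∀ j : Fin (p+1), (x ⟨j, r j⟩)^2 ≤ g j (r j) * q j := by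
      intro j
      have := aux_cs_matrix (hD j) (Pi.single (r j) 1) (fun v => x ⟨j, v⟩)
      simpa [hgdef, hqdef] using this
    have hcs0 : s^2 ≤ g 0 (r 0) * q 0 := hcs 0
    have hsplit : ∑ j, q j = q 0 + ∑ j ∈ ({0}ᶜ : Finset (Fin (p+1))), q j := by
      rw [← Finset.sum_add_sum_compl {(0 : Fin (p+1))} q, Finset.sum_singleton]
    set Q1 : ℝ := ∑ j ∈ ({0}ᶜ : Finset (Fin (p+1))), q j with hQ1def
    have hQ1 : 0 ≤ Q1 := Finset.sum_nonneg fun j _ => hq j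
    have hcst : t^2 ≤ b * Q1 := by
      have h1 : t^2 ≤ (∑ k ∈ ({0}ᶜ : Finset (Fin (p+1))), g k (r k))
          * ∑ k ∈ ({0}ᶜ : Finset (Fin (p+1))), (x ⟨k, r k⟩)^2 / g k (r k) := by
        rw [htdef]
        refine Finset.sum_sq_le_sum_mul_sum_of_sq_eq_mul _
          (fun k _ => (hgr k).le)
          (fun k _ => div_nonneg (sq_nonneg _) (hgr k).le)
          (fun k _ => ?_)
        rw [mul_comm (g k (r k)), div_mul_cancel₀ _ (ne_of_gt (hgr k))]
      have h2 : ∑ k ∈ ({0}ᶜ : Finset (Fin (p+1))), (x ⟨k, r k⟩)^2 / g k (r k) ≤ Q1 := by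
        rw [hQ1def]
        refine Finset.sum_le_sum fun k _ => ?_
        rw [div_le_iff₀ (hgr k)]
        calc (x ⟨k, r k⟩)^2 ≤ g k (r k) * q k := hcs k
        _ = q k * g k (r k) := mul_comm _ _
      calc t^2 ≤ _ := h1
      _ ≤ b * Q1 := by
          rw [← hbdef]
          exact mul_le_mul_of_nonneg_left h2 hb.le
    rw [hsplit]
    have hprod : s^2 * t^2 ≤ (g 0 (r 0) * q 0) * (b * Q1) :=
      mul_le_mul hcs0 hcst (sq_nonneg _) (mul_nonneg (hgr 0).le (hq 0))
    have hw2 : (δ * s * t)^2 ≤ q 0 * Q1 := by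
      have h3 : δ^2 * (s^2 * t^2) ≤ δ^2 * ((g 0 (r 0) * q 0) * (b * Q1)) :=
        mul_le_mul_of_nonneg_left hprod (sq_nonneg δ)
      have h4 : δ^2 * ((g 0 (r 0) * q 0) * (b * Q1)) = q 0 * Q1 := by
        linear_combination (q 0 * Q1) * hδ2
      nlinarith [h3, h4]
    nlinarith [hw2, hq 0, hQ1, sq_nonneg (q 0 - Q1), sq_nonneg (q 0 + Q1)]
  -- the eigenvector for `y`
  set u : (Σ i, V i) → ℝ := fun a => (if a.1 = 0 then -(δ * b) else 1) * g a.1 a.2 with hudef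
  have hu0 : ∀ v : V 0, u ⟨0, v⟩ = -(δ * b) * g 0 v := by intro v; simp [hudef]
  have hune : ∀ j : Fin (p+1), j ≠ 0 → ∀ v : V j, u ⟨j, v⟩ = g j v := by
    intro j hj v; simp [hudef, hj]
  have heig : odotMat Ms r δ *ᵥ u = y • u := by
    funext a
    obtain ⟨j, w⟩ := a
    rcases eq_or_ne j 0 with hj | hj
    · subst hj
      rw [odotMat_mulVec_zero]
      have hfun : (fun v => u ⟨0, v⟩) = (-(δ * b)) • g 0 := by
        funext v; rw [hu0 v]; rfl
      have hT : (∑ k ∈ ({0}ᶜ : Finset (Fin (p+1))), u ⟨k, r k⟩) = b := by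
        rw [hbdef]
        exact Finset.sum_congr rfl fun k hk => hune k (by simpa using hk) (r k)
      rw [hfun, hT, mulVec_smul, hMsg 0]
      have hru : (y • u) ⟨0, w⟩ = y * (-(δ * b) * g 0 w) := by
        rw [Pi.smul_apply, hu0 w, smul_eq_mul]
      rw [hru]
      rcases eq_or_ne w (r 0) with hw | hw
      · subst hw
        simp [Pi.single_apply]
        ring
      · simp [Pi.single_apply, hw]
        ring
    · rw [odotMat_mulVec_ne _ _ _ _ hj]
      rw [show (fun v => u ⟨j, v⟩) = g j from funext (hune j hj), hMsg j, hu0 (r 0)]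
      have hru : (y • u) ⟨j, w⟩ = y * g j w := by
        rw [Pi.smul_apply, hune j hj w, smul_eq_mul]
      rw [hru]
      rcases eq_or_ne w (r j) with hw | hw
      · subst hw
        simp only [Pi.add_apply, Pi.single_apply, Pi.smul_apply, smul_eq_mul, if_pos]
        linear_combination -hδ2
      · simp only [Pi.add_apply, Pi.single_apply, Pi.smul_apply, smul_eq_mul]
        rw [if_neg hw, if_neg hw]
        ring
  have hu_ne : u ≠ 0 := by
    intro h
    have h1 := congrFun h ⟨1, r 1⟩
    rw [hune 1 hone (r 1)] at h1
    exact (hgr 1).ne' h1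
  refine ⟨δ, hδ, aux_isRoot_of_eigvec hu_ne heig, ?_⟩
  intro z hz
  obtain ⟨v, hv, hv2⟩ := aux_eigvec_of_isRoot hz
  have h1 := psd v
  rw [hv2, dotProduct_smul, smul_eq_mul] at h1
  have h2 : 0 < v ⬝ᵥ v := by
    have := dotProduct_star_self_pos_iff (v := v)
    simpa using this.mpr hv
  nlinarith [h1, h2]
end

section
/- Let T be a tree with n vertices whose diameter is 4 and which lies in the family T* (equivalently, T = T_0 ⊙ (T_1,...,T_p) with p ≥ 2 where T_0 is a star with t_0 ≥ 1 leaves centered at the root and each T_i is a star with t_i ≥ 1 leaves centered at its root). Then the symmetric matrix M with all diagonal entries: 0 on the centers of T_1,...,T_p and their leaves, 1 on the main root and on the leaves attached to it; edge weights 1/√(t_i) between the center of T_i and each of its t_i leaves, 1/√(t_0) between the main root and each of its t_0 pendant leaves, and 2/√p between the main root and each center v_i; has distinct eigenvalue set {−2, −1, 0, 1, 3}, with multiplicities m(−2)=1, m(−1)=p−1, m(0)=1−p+Σt_i, m(1)=t_0+p−1, m(3)=1. -/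
open Matrix Polynomial

noncomputable def distEig {α : Type*} [Fintype α] [DecidableEq α]
    (A : Matrix α α ℝ) : Finset ℝ :=
  A.charpoly.roots.toFinset

noncomputable def multEig {α : Type*} [Fintype α] [DecidableEq α]
    (A : Matrix α α ℝ) (lam : ℝ) : ℕ :=
  A.charpoly.rootMultiplicity lam

/-- The vertex set of the diameter-4 tree in `T*`: the main root (`Unit`), its `t₀`
pendant leaves, the `p` centers `v₁,…,v_p`, and the `t i` leaves of each center. -/
abbrev V15 (t₀ p : ℕ) (t : Fin p → ℕ) : Type :=
  Unit ⊕ Fin t₀ ⊕ Fin p ⊕ (Σ i : Fin p, Fin (t i))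

/-- The weighted matrix of the diameter-4 tree: diagonal `1` on the main root and its
leaves, `0` on the centers and their leaves; edge weights `1/√t₀` (root to its leaves),
`2/√p` (root to centers) and `1/√(t i)` (center `i` to its leaves). -/
noncomputable def M15 (t₀ p : ℕ) (t : Fin p → ℕ) :
    Matrix (V15 t₀ p t) (V15 t₀ p t) ℝ := fun a b =>
  match a, b with
  | Sum.inl _, Sum.inl _ => 1
  | Sum.inl _, Sum.inr (Sum.inl _) => 1 / Real.sqrt t₀
  | Sum.inr (Sum.inl _), Sum.inl _ => 1 / Real.sqrt t₀
  | Sum.inr (Sum.inl x), Sum.inr (Sum.inl y) => if x = y then 1 else 0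
  | Sum.inl _, Sum.inr (Sum.inr (Sum.inl _)) => 2 / Real.sqrt p
  | Sum.inr (Sum.inr (Sum.inl _)), Sum.inl _ => 2 / Real.sqrt p
  | Sum.inr (Sum.inr (Sum.inl i)), Sum.inr (Sum.inr (Sum.inr ⟨j, _⟩)) =>
      if i = j then 1 / Real.sqrt (t i) else 0
  | Sum.inr (Sum.inr (Sum.inr ⟨j, _⟩)), Sum.inr (Sum.inr (Sum.inl i)) =>
      if i = j then 1 / Real.sqrt (t i) else 0
  | _, _ => 0

variable {α : Type*} [Fintype α] [DecidableEq α]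

lemma eval_charpoly' (A : Matrix α α ℝ) (x : ℝ) :
    A.charpoly.eval x = (x • (1 : Matrix α α ℝ) - A).det := by
  rw [Matrix.charpoly, ← coe_evalRingHom, RingHom.map_det]
  congr 1
  ext i j
  by_cases h : i = j <;>
    simp [h, charmatrix, Matrix.one_apply, Matrix.sub_apply, Matrix.smul_apply]

noncomputable def Brl (t₀ : ℕ) : Matrix Unit (Fin t₀) ℝ := fun _ _ => -(1 / Real.sqrt t₀)

noncomputable def A2m (t₀ : ℕ) (x : ℝ) : Matrix (Unit ⊕ Fin t₀) (Unit ⊕ Fin t₀) ℝ :=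
  fromBlocks (Matrix.of fun _ _ => x - 1) (Brl t₀) (Brl t₀)ᵀ ((x - 1) • 1)

noncomputable def Bc (t₀ p : ℕ) : Matrix (Unit ⊕ Fin t₀) (Fin p) ℝ := fun a _ =>
  match a with
  | Sum.inl _ => -(2 / Real.sqrt p)
  | Sum.inr _ => 0

noncomputable def A3m (t₀ p : ℕ) (x : ℝ) :
    Matrix ((Unit ⊕ Fin t₀) ⊕ Fin p) ((Unit ⊕ Fin t₀) ⊕ Fin p) ℝ :=
  fromBlocks (A2m t₀ x) (Bc t₀ p) (Bc t₀ p)ᵀ (x • 1)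

noncomputable def B3m (t₀ p : ℕ) (t : Fin p → ℕ) :
    Matrix ((Unit ⊕ Fin t₀) ⊕ Fin p) (Σ i : Fin p, Fin (t i)) ℝ := fun a s =>
  match a with
  | Sum.inr i => if i = s.1 then -(1 / Real.sqrt (t i)) else 0
  | _ => 0

def eV (t₀ p : ℕ) (t : Fin p → ℕ) :
    ((Unit ⊕ Fin t₀) ⊕ Fin p) ⊕ (Σ i : Fin p, Fin (t i)) ≃ V15 t₀ p t :=
  (Equiv.sumAssoc (Unit ⊕ Fin t₀) (Fin p) (Σ i : Fin p, Fin (t i))).trans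
    (Equiv.sumAssoc Unit (Fin t₀) (Fin p ⊕ Σ i : Fin p, Fin (t i)))

lemma hN (t₀ p : ℕ) (t : Fin p → ℕ) (x : ℝ) :
    (x • (1 : Matrix (V15 t₀ p t) (V15 t₀ p t) ℝ) - M15 t₀ p t).submatrix (eV t₀ p t) (eV t₀ p t) =
      fromBlocks (A3m t₀ p x) (B3m t₀ p t) (B3m t₀ p t)ᵀ (x • 1) := by
  ext a b
  obtain (((u | l) | c) | ⟨i, j⟩) := a <;> obtain (((u' | l') | c') | ⟨i', j'⟩) := b <;>
    simp [eV, M15, A3m, A2m, B3m, Bc, Brl, Matrix.one_apply, fromBlocks,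
      Sigma.mk.inj_iff, eq_comm] <;>
    aesop

lemma hBB (t₀ p : ℕ) (t : Fin p → ℕ) (ht : ∀ i, 1 ≤ t i) :
    B3m t₀ p t * (B3m t₀ p t)ᵀ = fromBlocks 0 0 0 (1 : Matrix (Fin p) (Fin p) ℝ) := by
  ext a b
  obtain ((u | l) | c) := a <;> obtain ((u' | l') | c') := b <;>
    simp only [Matrix.mul_apply, Matrix.transpose_apply, B3m, Matrix.fromBlocks_apply₁₁,
      Matrix.fromBlocks_apply₁₂, Matrix.fromBlocks_apply₂₁, Matrix.fromBlocks_apply₂₂,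
      Matrix.zero_apply, mul_zero, zero_mul, Finset.sum_const_zero, Matrix.one_apply]
  rw [← Finset.univ_sigma_univ, Finset.sum_sigma]
  rw [Finset.sum_eq_single c]
  · by_cases h : c = c'
    · subst h
      simp only [if_pos rfl, Finset.sum_const, Finset.card_univ, Fintype.card_fin]
      have h0 : (0:ℝ) < (t c : ℝ) := by
        exact_mod_cast Nat.lt_of_lt_of_le Nat.zero_lt_one (ht c)
      simp only [if_true]
      rw [neg_mul_neg, div_mul_div_comm,
        one_mul, Real.mul_self_sqrt h0.le, nsmul_eq_mul, mul_one_div, div_self h0.ne']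
    · simp [if_neg h, if_neg (h ∘ Eq.symm : ¬ c' = c)]
  · intro k _ hk
    simp [if_neg (fun hh : c = k => hk hh.symm)]
  · simp

lemma hBcBc (t₀ p : ℕ) (hp : 2 ≤ p) :
    Bc t₀ p * (Bc t₀ p)ᵀ =
      fromBlocks (Matrix.of fun _ _ => (4 : ℝ)) 0 0 (0 : Matrix (Fin t₀) (Fin t₀) ℝ) := by
  have h0 : (0:ℝ) < (p : ℝ) := by exact_mod_cast Nat.lt_of_lt_of_le Nat.zero_lt_two hp
  ext a b
  obtain (u | l) := a <;> obtain (u' | l') := b <;>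
    simp only [Matrix.mul_apply, Matrix.transpose_apply, Bc, Matrix.fromBlocks_apply₁₁,
      Matrix.fromBlocks_apply₁₂, Matrix.fromBlocks_apply₂₁, Matrix.fromBlocks_apply₂₂,
      Matrix.zero_apply, mul_zero, zero_mul, Finset.sum_const_zero, Matrix.of_apply]
  rw [Finset.sum_const, Finset.card_univ, Fintype.card_fin, neg_mul_neg, div_mul_div_comm,
    Real.mul_self_sqrt h0.le, nsmul_eq_mul]
  field_simp
  ring

lemma hBrlBrl (t₀ : ℕ) (ht₀ : 1 ≤ t₀) :
    Brl t₀ * (Brl t₀)ᵀ = Matrix.of fun _ _ => (1 : ℝ) := by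
  have h0 : (0:ℝ) < (t₀ : ℝ) := by exact_mod_cast Nat.lt_of_lt_of_le Nat.zero_lt_one ht₀
  ext a b
  simp only [Matrix.mul_apply, Matrix.transpose_apply, Brl, Matrix.of_apply]
  rw [Finset.sum_const, Finset.card_univ, Fintype.card_fin, neg_mul_neg, div_mul_div_comm,
    one_mul, Real.mul_self_sqrt h0.le, nsmul_eq_mul, mul_one_div, div_self h0.ne']

lemma fromBlocks_sub' {n m : Type*} (A A' : Matrix n n ℝ) (B B' : Matrix n m ℝ)
    (C C' : Matrix m n ℝ) (D D' : Matrix m m ℝ) :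
    fromBlocks A B C D - fromBlocks A' B' C' D' =
      fromBlocks (A - A') (B - B') (C - C') (D - D') := by
  ext a b
  obtain (i | i) := a <;> obtain (j | j) := b <;> simp

noncomputable def smul_one_invertible {n : Type*} [Fintype n] [DecidableEq n] {c : ℝ} (hc : c ≠ 0) :
    Invertible (c • (1 : Matrix n n ℝ)) :=
  ⟨c⁻¹ • 1, by rw [smul_mul_assoc, Matrix.one_mul, smul_smul, inv_mul_cancel₀ hc, one_smul],
    by rw [smul_mul_assoc, Matrix.one_mul, smul_smul, mul_inv_cancel₀ hc, one_smul]⟩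

lemma schur_smul_one {n m : Type*} [Fintype n] [Fintype m] [DecidableEq n] [DecidableEq m]
    (A : Matrix n n ℝ) (B : Matrix n m ℝ) (C : Matrix m n ℝ) {c : ℝ} (hc : c ≠ 0) :
    (fromBlocks A B C (c • (1 : Matrix m m ℝ))).det =
      c ^ Fintype.card m * (A - c⁻¹ • (B * C)).det := by
  letI := smul_one_invertible (n := m) hc
  rw [det_fromBlocks₂₂]
  have h1 : ⅟(c • (1 : Matrix m m ℝ)) = c⁻¹ • 1 := rfl
  rw [h1, det_smul, det_one, mul_one]
  congr 2
  rw [Matrix.mul_smul, Matrix.mul_one, Matrix.smul_mul]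

lemma det_M15 (t₀ p : ℕ) (t : Fin p → ℕ) (hp : 2 ≤ p) (ht₀ : 1 ≤ t₀) (ht : ∀ i, 1 ≤ t i)
    (x : ℝ) (hx0 : x ≠ 0) (hc : x - x⁻¹ ≠ 0) (hx1 : x - 1 ≠ 0) :
    (x • (1 : Matrix (V15 t₀ p t) (V15 t₀ p t) ℝ) - M15 t₀ p t).det =
      x ^ (∑ i, t i) * (x - x⁻¹) ^ p * (x - 1) ^ t₀ *
        ((x - 1) - 4 / (x - x⁻¹) - 1 / (x - 1)) := by
  rw [← det_submatrix_equiv_self (eV t₀ p t), hN, schur_smul_one _ _ _ hx0, hBB t₀ p t ht]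
  have hcard : Fintype.card (Σ i : Fin p, Fin (t i)) = ∑ i, t i := by
    simp [Fintype.card_sigma]
  rw [hcard]
  have e1 : A3m t₀ p x - x⁻¹ • (fromBlocks 0 0 0 (1 : Matrix (Fin p) (Fin p) ℝ)) =
      fromBlocks (A2m t₀ x) (Bc t₀ p) (Bc t₀ p)ᵀ ((x - x⁻¹) • 1) := by
    rw [A3m, Matrix.fromBlocks_smul, fromBlocks_sub']
    simp [sub_smul]
  rw [e1, schur_smul_one _ _ _ hc, Fintype.card_fin, hBcBc t₀ p hp]
  have e2 : A2m t₀ x - (x - x⁻¹)⁻¹ •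
      (fromBlocks (Matrix.of fun _ _ => (4:ℝ)) 0 0 (0 : Matrix (Fin t₀) (Fin t₀) ℝ)) =
      fromBlocks (Matrix.of fun _ _ => x - 1 - 4 / (x - x⁻¹)) (Brl t₀) (Brl t₀)ᵀ ((x - 1) • 1) := by
    ext a b
    obtain (u | l) := a <;> obtain (u' | l') := b <;>
      simp [A2m, Matrix.sub_apply, Matrix.smul_apply, sub_smul, div_eq_inv_mul,
        Matrix.one_apply] <;> ring
  rw [e2, schur_smul_one _ _ _ hx1, Fintype.card_fin, hBrlBrl t₀ ht₀, det_unique]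
  simp [Matrix.sub_apply, Matrix.smul_apply]
  ring

lemma charpoly_M15 (t₀ p : ℕ) (t : Fin p → ℕ) (hp : 2 ≤ p) (ht₀ : 1 ≤ t₀)
    (ht : ∀ i, 1 ≤ t i) :
    (M15 t₀ p t).charpoly =
      (X - C (0:ℝ)) ^ ((∑ i, t i) - p + 1) * (X - C (-1)) ^ (p - 1) *
        (X - C 1) ^ (t₀ + (p - 1)) * (X - C 3) * (X - C (-2)) := by
  set a := (∑ i, t i) - p with ha
  set k := p - 1 with hk
  have hps : p ≤ ∑ i, t i := by
    calc p = ∑ _i : Fin p, 1 := by simp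
    _ ≤ ∑ i, t i := Finset.sum_le_sum fun i _ => ht i
  have hsum : ∑ i, t i = a + p := by omega
  have hpk : p = k + 1 := by omega
  apply Polynomial.eq_of_infinite_eval_eq
  apply Set.Infinite.mono (s := Set.Ioi (3:ℝ)) _ (Set.Ioi_infinite 3)
  intro x hx
  simp only [Set.mem_Ioi] at hx
  simp only [Set.mem_setOf_eq]
  have hx0 : x ≠ 0 := by linarith
  have hx1 : x - 1 ≠ 0 := by linarith
  have hx2 : x + 1 ≠ 0 := by linarith
  have hinv : x⁻¹ < 1 := by
    rw [inv_lt_one_iff₀]; right; linarith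
  have hcc : x - x⁻¹ ≠ 0 := by
    have : (0:ℝ) < x - x⁻¹ := by linarith
    linarith
  rw [eval_charpoly', det_M15 t₀ p t hp ht₀ ht x hx0 hcc hx1]
  have hxx : x - x⁻¹ = (x - 1) * (x + 1) / x := by field_simp; ring
  simp only [eval_mul, eval_pow, eval_sub, eval_X, eval_C]
  rw [hsum, hpk, hxx, div_pow, mul_pow]
  field_simp
  ring


/-- The matrix `M15` has distinct eigenvalue set `{−2, −1, 0, 1, 3}` with
multiplicities `1, p − 1, 1 − p + Σ tᵢ, t₀ + p − 1, 1` respectively. -/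
theorem stmt15 (t₀ p : ℕ) (t : Fin p → ℕ) (hp : 2 ≤ p) (ht₀ : 1 ≤ t₀)
    (ht : ∀ i, 1 ≤ t i) :
    distEig (M15 t₀ p t) = ({-2, -1, 0, 1, 3} : Finset ℝ) ∧
    multEig (M15 t₀ p t) (-2) = 1 ∧
    multEig (M15 t₀ p t) (-1) + 1 = p ∧
    multEig (M15 t₀ p t) 0 + p = 1 + ∑ i, t i ∧
    multEig (M15 t₀ p t) 1 + 1 = t₀ + p ∧
    multEig (M15 t₀ p t) 3 = 1 := by
  have hcp := charpoly_M15 t₀ p t hp ht₀ ht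
  set a := (∑ i, t i) - p with ha
  set k := p - 1 with hk
  have hps : p ≤ ∑ i, t i := by
    calc p = ∑ _i : Fin p, 1 := by simp
    _ ≤ ∑ i, t i := Finset.sum_le_sum fun i _ => ht i
  have hm : ∀ (c : ℝ) (n : ℕ), ((X - C c) ^ n).Monic := fun c n => (monic_X_sub_C c).pow n
  have hrm : ∀ (f g : ℝ[X]), f.Monic → g.Monic → (f * g).roots = f.roots + g.roots :=
    fun f g hf hg => roots_mul (hf.mul hg).ne_zero
  have m1 := hm (0:ℝ) (a + 1)
  have m2 := hm (-1:ℝ) k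
  have m3 := hm (1:ℝ) (t₀ + k)
  have m4 := monic_X_sub_C (3:ℝ)
  have m5 := monic_X_sub_C (-2:ℝ)
  have hroots : (M15 t₀ p t).charpoly.roots =
      (a + 1) • {(0:ℝ)} + k • {-1} + (t₀ + k) • {1} + {3} + {-2} := by
    rw [hcp, hrm _ _ (((m1.mul m2).mul m3).mul m4) m5, hrm _ _ ((m1.mul m2).mul m3) m4,
      hrm _ _ (m1.mul m2) m3, hrm _ _ m1 m2, roots_pow, roots_pow, roots_pow,
      roots_X_sub_C, roots_X_sub_C, roots_X_sub_C, roots_X_sub_C, roots_X_sub_C]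
  have hcount : ∀ lam : ℝ, multEig (M15 t₀ p t) lam =
      (a + 1) * (if lam = 0 then 1 else 0) + k * (if lam = -1 then 1 else 0) +
      (t₀ + k) * (if lam = 1 then 1 else 0) + (if lam = 3 then 1 else 0) +
      (if lam = -2 then 1 else 0) := by
    intro lam
    rw [multEig, ← Polynomial.count_roots, hroots]
    simp [Multiset.count_nsmul, Multiset.count_singleton, mul_ite]
  refine ⟨?_, ?_, ?_, ?_, ?_, ?_⟩
  · rw [distEig, hroots]
    rw [Multiset.toFinset_add, Multiset.toFinset_add, Multiset.toFinset_add,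
      Multiset.toFinset_add, Multiset.toFinset_nsmul _ _ (by omega : a + 1 ≠ 0),
      Multiset.toFinset_nsmul _ _ (by omega : k ≠ 0),
      Multiset.toFinset_nsmul _ _ (by omega : t₀ + k ≠ 0)]
    ext y
    simp only [Finset.mem_union, Multiset.toFinset_singleton, Finset.mem_singleton,
      Finset.mem_insert]
    tauto
  · rw [hcount]; norm_num
  · rw [hcount]; norm_num; omega
  · rw [hcount]; norm_num; omega
  · rw [hcount]; norm_num; omega
  · rw [hcount]; norm_num
end
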